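/- Let T ≥ 0, η > 0 and α > 2. For λ_p > 0 and s > 0 define P(λ_p, s) := (1/s²)·∫_{S₀(s)} e^{−π λ_p η^{2/α} ‖u‖²} · [∏_{z ∈ ℤ²\{(0,0)}} (1 + T‖u‖^α/‖u + s·z‖^α)^{−1}] · exp(−2π λ_p ∫_{‖u‖ η^{1/α}}^{∞} (T η ‖u‖^α v^{1−α})/(1 + T η ‖u‖^α v^{−α}) dv) du + ∫_0^{∞} (1/s²)·[∫_{S₀(s) \ B(0, r η^{−1/α})} ∏_{z ∈ ℤ²} (1 + η^{−1} T r^α/‖u′ + s·z‖^α)^{−1} du′] · exp(−2π λ_p ∫_r^{∞} (T r^α v^{1−α})/(1 + T r^α v^{−α}) dv) · 2π λ_p r e^{−π λ_p r²} dr. Then P(λ_p, s) = P(λ_p s², 1) for all λ_p, s > 0; that is, P(λ_p, s) depends on (λ_p, s) only through the intensity ratio ρ_λ = λ_p s². -/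

import Mathlib

open MeasureTheory Real

/-- The grid point `s·z = (s z₁, s z₂)` for `z ∈ ℤ²`. -/
noncomputable def gridPt (s : ℝ) (k : ℤ × ℤ) : EuclideanSpace ℝ (Fin 2) :=
  (WithLp.equiv 2 (Fin 2 → ℝ)).symm ![s * (k.1 : ℝ), s * (k.2 : ℝ)]

/-- The square `S₀(s) = [−s/2, s/2] × [−s/2, s/2]`. -/
def square (s : ℝ) : Set (EuclideanSpace ℝ (Fin 2)) :=
  {u | u 0 ∈ Set.Icc (-(s / 2)) (s / 2) ∧ u 1 ∈ Set.Icc (-(s / 2)) (s / 2)}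

/-- The coverage probability `P(λ_p, s)` of Theorem 2: the first term is
`P(SIR ≥ T, grid association)` and the second is `P(SIR ≥ T, Poisson association)`. -/
noncomputable def covP (T η α lamp s : ℝ) : ℝ :=
  (1 / s ^ 2) *
    ∫ u in square s,
      Real.exp (-(π * lamp * η ^ ((2:ℝ) / α) * ‖u‖ ^ 2)) *
      (∏' z : {z : ℤ × ℤ // z ≠ (0, 0)},
        (1 + T * ‖u‖ ^ α / ‖u + gridPt s (z : ℤ × ℤ)‖ ^ α)⁻¹) *
      Real.exp (-(2 * π * lamp *
        ∫ v in Set.Ioi (‖u‖ * η ^ ((1:ℝ) / α)),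
          T * η * ‖u‖ ^ α * v ^ (1 - α) / (1 + T * η * ‖u‖ ^ α * v ^ (-α))))
  + ∫ r in Set.Ioi (0 : ℝ),
      (1 / s ^ 2) *
      (∫ u' in square s \ Metric.closedBall 0 (r * η ^ (-(1:ℝ) / α)),
        ∏' z : ℤ × ℤ, (1 + η⁻¹ * T * r ^ α / ‖u' + gridPt s z‖ ^ α)⁻¹) *
      Real.exp (-(2 * π * lamp *
        ∫ v in Set.Ioi r, T * r ^ α * v ^ (1 - α) / (1 + T * r ^ α * v ^ (-α)))) *
      (2 * π * lamp * r * Real.exp (-(π * lamp * r ^ 2)))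

open Pointwise

lemma gridPt_smul (s : ℝ) (k : ℤ × ℤ) : gridPt s k = s • gridPt 1 k := by
  ext i
  fin_cases i <;>
    simp [gridPt, WithLp.equiv_symm_apply, PiLp.toLp_apply, PiLp.smul_apply, smul_eq_mul]

lemma norm_smul_pos {s : ℝ} (hs : 0 < s) (x : EuclideanSpace ℝ (Fin 2)) :
    ‖s • x‖ = s * ‖x‖ := by
  rw [norm_smul, Real.norm_eq_abs, abs_of_pos hs]

lemma square_smul {s : ℝ} (hs : 0 < s) : square s = s • square 1 := by
  ext u
  rw [Set.mem_smul_set_iff_inv_smul_mem₀ hs.ne']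
  show _ ↔ (s⁻¹ • u) 0 ∈ Set.Icc (-(1/2):ℝ) (1/2) ∧ (s⁻¹ • u) 1 ∈ Set.Icc (-(1/2):ℝ) (1/2)
  simp only [square, Set.mem_setOf_eq, PiLp.smul_apply, smul_eq_mul, Set.mem_Icc,
    inv_mul_eq_div, le_div_iff₀ hs, div_le_iff₀ hs]
  constructor <;> rintro ⟨⟨a, b⟩, ⟨c, d⟩⟩ <;>
    exact ⟨⟨by linarith, by linarith⟩, by linarith, by linarith⟩

lemma diff_smul {s ρ : ℝ} (hs : 0 < s) (hρ : 0 ≤ ρ) :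
    square s \ Metric.closedBall 0 (s * ρ) = s • (square 1 \ Metric.closedBall 0 ρ) := by
  rw [Set.smul_set_sdiff₀ hs.ne', ← square_smul hs, smul_closedBall _ _ hρ, smul_zero,
    Real.norm_eq_abs, abs_of_pos hs]

lemma vint {α : ℝ} {s a c : ℝ} (hs : 0 < s) (ha : 0 ≤ a) :
    (∫ v in Set.Ioi (s * a), c * s ^ α * v ^ (1 - α) / (1 + c * s ^ α * v ^ (-α)))
      = s ^ 2 * ∫ w in Set.Ioi a, c * w ^ (1 - α) / (1 + c * w ^ (-α)) := by
  have h1 := integral_comp_mul_left_Ioi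
    (fun v => c * s ^ α * v ^ (1 - α) / (1 + c * s ^ α * v ^ (-α))) a hs
  have h2 : (∫ v in Set.Ioi (s * a), c * s ^ α * v ^ (1 - α) / (1 + c * s ^ α * v ^ (-α)))
      = s * ∫ x in Set.Ioi a,
          c * s ^ α * (s * x) ^ (1 - α) / (1 + c * s ^ α * (s * x) ^ (-α)) := by
    rw [h1, smul_eq_mul, ← mul_assoc, mul_inv_cancel₀ hs.ne', one_mul]
  rw [h2]
  have h3 : ∀ x ∈ Set.Ioi a,
      c * s ^ α * (s * x) ^ (1 - α) / (1 + c * s ^ α * (s * x) ^ (-α))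
        = s * (c * x ^ (1 - α) / (1 + c * x ^ (-α))) := by
    intro x hx
    have hx0 : 0 < x := lt_of_le_of_lt ha hx
    rw [Real.mul_rpow hs.le hx0.le, Real.mul_rpow hs.le hx0.le]
    have e1 : c * s ^ α * (s ^ (1-α) * x ^ (1-α)) = s * (c * x ^ (1-α)) := by
      rw [show c * s ^ α * (s ^ (1-α) * x ^ (1-α)) = (s ^ α * s ^ (1-α)) * (c * x ^ (1-α)) by ring,
        ← Real.rpow_add hs, show α + (1-α) = (1:ℝ) by ring, Real.rpow_one]
    have e2 : c * s ^ α * (s ^ (-α) * x ^ (-α)) = c * x ^ (-α) := by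
      rw [show c * s ^ α * (s ^ (-α) * x ^ (-α)) = (s ^ α * s ^ (-α)) * (c * x ^ (-α)) by ring,
        ← Real.rpow_add hs, add_neg_cancel, Real.rpow_zero, one_mul]
    rw [e1, e2, mul_div_assoc]
  rw [setIntegral_congr_fun measurableSet_Ioi h3, integral_const_mul, ← mul_assoc, sq]

lemma setIntegral_smul_set {s : ℝ} (hs : 0 < s) (A : Set (EuclideanSpace ℝ (Fin 2)))
    (f : EuclideanSpace ℝ (Fin 2) → ℝ) :
    ∫ x in s • A, f x = s ^ 2 * ∫ x in A, f (s • x) := by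
  rw [Measure.setIntegral_comp_smul_of_pos volume f A hs, finrank_euclideanSpace, Fintype.card_fin,
    smul_eq_mul, ← mul_assoc, mul_inv_cancel₀ (by positivity), one_mul]

lemma Ioi_zero_scale (f : ℝ → ℝ) {s : ℝ} (hs : 0 < s) :
    ∫ r in Set.Ioi (0:ℝ), f r = ∫ x in Set.Ioi (0:ℝ), s * f (s * x) := by
  have key := integral_comp_mul_left_Ioi f 0 hs
  rw [mul_zero] at key
  calc ∫ r in Set.Ioi (0:ℝ), f r = s * ∫ x in Set.Ioi (0:ℝ), f (s * x) := by
        rw [key, smul_eq_mul, ← mul_assoc, mul_inv_cancel₀ hs.ne', one_mul]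
    _ = _ := (integral_const_mul s _).symm

set_option maxHeartbeats 2000000 in
/-- Theorem 2, scale invariance: the coverage probability `P(λ_p, s)`
depends on `(λ_p, s)` only through the intensity ratio `ρ_λ = λ_p s²`. -/
theorem covP_scale_invariant (T η α : ℝ) (hT : 0 ≤ T) (hη : 0 < η) (hα : 2 < α) :
    ∀ lamp s : ℝ, 0 < lamp → 0 < s → covP T η α lamp s = covP T η α (lamp * s ^ 2) 1 := by
  intro lamp s hl hs
  have hsa : (0:ℝ) < s ^ α := Real.rpow_pos_of_pos hs α
  -- equality of the (u-independent) Poisson-association terms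
  have hC : (∫ r in Set.Ioi (0:ℝ),
        (1 / s ^ 2) *
        (∫ u' in square s \ Metric.closedBall 0 (r * η ^ (-(1:ℝ) / α)),
          ∏' z : ℤ × ℤ, (1 + η⁻¹ * T * r ^ α / ‖u' + gridPt s z‖ ^ α)⁻¹) *
        Real.exp (-(2 * π * lamp *
          ∫ v in Set.Ioi r, T * r ^ α * v ^ (1 - α) / (1 + T * r ^ α * v ^ (-α)))) *
        (2 * π * lamp * r * Real.exp (-(π * lamp * r ^ 2))))
      = ∫ r in Set.Ioi (0:ℝ),
        (1 / 1 ^ 2) *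
        (∫ u' in square 1 \ Metric.closedBall 0 (r * η ^ (-(1:ℝ) / α)),
          ∏' z : ℤ × ℤ, (1 + η⁻¹ * T * r ^ α / ‖u' + gridPt 1 z‖ ^ α)⁻¹) *
        Real.exp (-(2 * π * (lamp * s ^ 2) *
          ∫ v in Set.Ioi r, T * r ^ α * v ^ (1 - α) / (1 + T * r ^ α * v ^ (-α)))) *
        (2 * π * (lamp * s ^ 2) * r * Real.exp (-(π * (lamp * s ^ 2) * r ^ 2))) := by
    rw [Ioi_zero_scale _ hs]
    refine setIntegral_congr_fun measurableSet_Ioi fun r hr => ?_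
    rw [Set.mem_Ioi] at hr
    have hra : (s * r) ^ α = s ^ α * r ^ α := Real.mul_rpow hs.le hr.le
    have hJ : (∫ u' in square s \ Metric.closedBall 0 (s * r * η ^ (-(1:ℝ) / α)),
          ∏' z : ℤ × ℤ, (1 + η⁻¹ * T * (s * r) ^ α / ‖u' + gridPt s z‖ ^ α)⁻¹)
        = s ^ 2 * ∫ u' in square 1 \ Metric.closedBall 0 (r * η ^ (-(1:ℝ) / α)),
          ∏' z : ℤ × ℤ, (1 + η⁻¹ * T * r ^ α / ‖u' + gridPt 1 z‖ ^ α)⁻¹ := by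
      rw [mul_assoc s r _, diff_smul hs (by positivity), setIntegral_smul_set hs]
      congr 1
      refine integral_congr_ae (Filter.Eventually.of_forall fun u' => ?_)
      refine tprod_congr fun z => ?_
      rw [show s • u' + gridPt s z = s • (u' + gridPt 1 z) by rw [gridPt_smul, smul_add],
        norm_smul_pos hs, Real.mul_rpow hs.le (norm_nonneg _), hra,
        show η⁻¹ * T * (s ^ α * r ^ α) = s ^ α * (η⁻¹ * T * r ^ α) by ring,
        mul_div_mul_left _ _ hsa.ne']
    have hcc : T * (s * r) ^ α = T * r ^ α * s ^ α := by rw [hra]; ring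
    have hK : (∫ v in Set.Ioi (s * r), T * (s * r) ^ α * v ^ (1 - α)
            / (1 + T * (s * r) ^ α * v ^ (-α)))
        = s ^ 2 * ∫ v in Set.Ioi r, T * r ^ α * v ^ (1 - α) / (1 + T * r ^ α * v ^ (-α)) := by
      simp only [hcc]
      exact vint hs hr.le
    rw [hJ, hK,
      show 2 * π * lamp * (s ^ 2 * ∫ v in Set.Ioi r,
          T * r ^ α * v ^ (1 - α) / (1 + T * r ^ α * v ^ (-α)))
        = 2 * π * (lamp * s ^ 2) * ∫ v in Set.Ioi r,
          T * r ^ α * v ^ (1 - α) / (1 + T * r ^ α * v ^ (-α)) by ring,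
      show π * lamp * (s * r) ^ 2 = π * (lamp * s ^ 2) * r ^ 2 by ring]
    field_simp
  unfold covP
  rw [hC, square_smul hs, setIntegral_smul_set hs, ← mul_assoc, one_div,
    inv_mul_cancel₀ (by positivity : (s:ℝ) ^ 2 ≠ 0), one_mul,
    show (1:ℝ) / 1 ^ 2 = 1 by norm_num, one_mul]
  refine integral_congr_ae (Filter.Eventually.of_forall fun x => ?_)
  refine congrArg (fun t => t + _) ?_
  have hn := norm_smul_pos hs x
  have hnr : ‖s • x‖ ^ α = s ^ α * ‖x‖ ^ α := by
    rw [hn, Real.mul_rpow hs.le (norm_nonneg x)]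
  have hcc : T * η * ‖s • x‖ ^ α = T * η * ‖x‖ ^ α * s ^ α := by rw [hnr]; ring
  simp only [hcc]
  rw [hn, mul_assoc s ‖x‖ _, vint hs (by positivity)]
  congr 1
  · congr 1
    · congr 1
      ring
    · refine tprod_congr fun z => ?_
      rw [show s • x + gridPt s (z : ℤ × ℤ) = s • (x + gridPt 1 (z : ℤ × ℤ)) by
          rw [gridPt_smul, smul_add],
        norm_smul_pos hs, Real.mul_rpow hs.le (norm_nonneg x),
        Real.mul_rpow hs.le (norm_nonneg _),
        show T * (s ^ α * ‖x‖ ^ α) = s ^ α * (T * ‖x‖ ^ α) by ring,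
        mul_div_mul_left _ _ hsa.ne']
  · congr 1
    ring
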